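/- Let M be a metric space, let N be a subset of M which is a local retract of M, fix a point x₀ ∈ N, and fix n ∈ ℕ. Then there exists a map T assigning to each Lipschitz function f : N → ℝⁿ with f(x₀) = 0 a function Tf : M → ℝⁿ such that: (i) Tf extends f, i.e. Tf(x) = f(x) for all x ∈ N; (ii) for every L ≥ 0, if f is L-Lipschitz then Tf is L-Lipschitz; (iii) T is linear, i.e. T(f+g)(x) = Tf(x) + Tg(x) and T(c·f)(x) = c·Tf(x) for all such Lipschitz functions f, g vanishing at x₀, all scalars c ∈ ℝ, and all x ∈ M. -/

import Mathlib

/-- A subset `N` of a metric space `M` is a local retract of `M` if for every finite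
subset `E` of `M` and every `ε > 0` there exists a `(1+ε)`-Lipschitz map `r : E → N`
fixing every point of `E ∩ N`. -/
def IsLocalRetract {M : Type*} [MetricSpace M] (N : Set M) : Prop :=
  ∀ E : Finset M, ∀ ε : ℝ, 0 < ε →
    ∃ r : M → M, (∀ x ∈ E, r x ∈ N) ∧ (∀ e ∈ E, e ∈ N → r e = e) ∧
      ∀ x ∈ E, ∀ y ∈ E, dist (r x) (r y) ≤ (1 + ε) * dist x y

theorem stmt1 {M : Type*} [MetricSpace M] (N : Set M) (hN : IsLocalRetract N)
    (x₀ : M) (hx₀ : x₀ ∈ N) (n : ℕ) :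
    ∃ T : (N → EuclideanSpace ℝ (Fin n)) → (M → EuclideanSpace ℝ (Fin n)),
      -- (i) and (ii): `T f` extends `f` and preserves Lipschitz constants
      (∀ f : N → EuclideanSpace ℝ (Fin n),
        (∃ L : ℝ, ∀ x y : N, dist (f x) (f y) ≤ L * dist x y) → f ⟨x₀, hx₀⟩ = 0 →
          (∀ x : N, T f x = f x) ∧
          (∀ L : ℝ, 0 ≤ L → (∀ x y : N, dist (f x) (f y) ≤ L * dist x y) →
            ∀ x y : M, dist (T f x) (T f y) ≤ L * dist x y)) ∧
      -- (iii) additivity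
      (∀ f g : N → EuclideanSpace ℝ (Fin n),
        (∃ L : ℝ, ∀ x y : N, dist (f x) (f y) ≤ L * dist x y) → f ⟨x₀, hx₀⟩ = 0 →
        (∃ L : ℝ, ∀ x y : N, dist (g x) (g y) ≤ L * dist x y) → g ⟨x₀, hx₀⟩ = 0 →
          ∀ x : M, T (f + g) x = T f x + T g x) ∧
      -- (iii) homogeneity
      (∀ f : N → EuclideanSpace ℝ (Fin n),
        (∃ L : ℝ, ∀ x y : N, dist (f x) (f y) ≤ L * dist x y) → f ⟨x₀, hx₀⟩ = 0 →
          ∀ c : ℝ, ∀ x : M, T (c • f) x = c • T f x) := by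
  classical
  -- Index set: finite sets together with a natural number encoding ε = 1/(k+1)
  let I := Finset M × ℕ
  let V := EuclideanSpace ℝ (Fin n)
  let εi : I → ℝ := fun i => 1 / (i.2 + 1)
  have εpos : ∀ i : I, 0 < εi i := fun i => by positivity
  let r : I → M → M := fun i => (hN i.1 (εi i) (εpos i)).choose
  have hr1 : ∀ i : I, ∀ x ∈ i.1, r i x ∈ N :=
    fun i => (hN i.1 (εi i) (εpos i)).choose_spec.1
  have hr2 : ∀ i : I, ∀ e ∈ i.1, e ∈ N → r i e = e :=
    fun i => (hN i.1 (εi i) (εpos i)).choose_spec.2.1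
  have hr3 : ∀ i : I, ∀ x ∈ i.1, ∀ y ∈ i.1,
      dist (r i x) (r i y) ≤ (1 + εi i) * dist x y :=
    fun i => (hN i.1 (εi i) (εpos i)).choose_spec.2.2
  let gg : I → M → N := fun i x => if h : x ∈ i.1 then ⟨r i x, hr1 i x h⟩ else ⟨x₀, hx₀⟩
  let U : Ultrafilter I := Ultrafilter.of Filter.atTop
  have hU : (U : Filter I) ≤ Filter.atTop := Ultrafilter.of_le _
  have hEv : ∀ (E₀ : Finset M) (ε₀ : ℝ), 0 < ε₀ →
      ∀ᶠ i : I in Filter.atTop, E₀ ⊆ i.1 ∧ εi i ≤ ε₀ := by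
    intro E₀ ε₀ hε₀
    obtain ⟨k, hk⟩ := exists_nat_one_div_lt hε₀
    filter_upwards [Filter.eventually_ge_atTop (E₀, k)] with i hi
    obtain ⟨h1, h2⟩ := hi
    refine ⟨h1, ?_⟩
    have : (εi i : ℝ) ≤ 1 / (k + 1) := by
      apply one_div_le_one_div_of_le (by positivity)
      have : (k : ℝ) ≤ i.2 := by exact_mod_cast h2
      linarith
    linarith [hk.le]
  have hggdist : ∀ i : I, ∀ x ∈ i.1, ∀ y ∈ i.1,
      dist (gg i x) (gg i y) ≤ (1 + εi i) * dist x y := by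
    intro i x hx y hy
    simp only [gg, dif_pos hx, dif_pos hy, Subtype.dist_eq]
    exact hr3 i x hx y hy
  let φ : (N → V) → M → I → V := fun f x i => f (gg i x)
  let T : (N → V) → M → V := fun f x =>
    if h : ∃ y, Filter.Tendsto (φ f x) ↑U (nhds y) then h.choose else 0
  have hTeq : ∀ (f : N → V) (x : M) (y : V),
      Filter.Tendsto (φ f x) ↑U (nhds y) → T f x = y := by
    intro f x y hy
    have hex : ∃ z, Filter.Tendsto (φ f x) ↑U (nhds z) := ⟨y, hy⟩
    have h1 : T f x = hex.choose := dif_pos hex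
    exact h1.trans (tendsto_nhds_unique hex.choose_spec hy)
  have hTend : ∀ (f : N → V) (L : ℝ),
      (∀ u v : N, dist (f u) (f v) ≤ L * dist u v) → f ⟨x₀, hx₀⟩ = 0 →
      ∀ x : M, Filter.Tendsto (φ f x) ↑U (nhds (T f x)) := by
    intro f L hL hf0 x
    set K : Set V := Metric.closedBall (0 : V) (2 * |L| * dist x x₀) with hK
    have hbd : ∀ᶠ i : I in Filter.atTop, φ f x i ∈ K := by
      filter_upwards [hEv {x, x₀} 1 one_pos] with i hi
      obtain ⟨hsub, hεle⟩ := hi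
      have hx : x ∈ i.1 := hsub (by simp)
      have hx0 : x₀ ∈ i.1 := hsub (by simp)
      have hg0 : gg i x₀ = ⟨x₀, hx₀⟩ := by
        simp only [gg, dif_pos hx0]
        exact Subtype.ext (hr2 i x₀ hx0 hx₀)
      have hd : dist (φ f x i) 0 ≤ 2 * |L| * dist x x₀ := by
        calc dist (φ f x i) 0 = dist (f (gg i x)) (f (gg i x₀)) := by
              rw [hg0, hf0]
          _ ≤ L * dist (gg i x) (gg i x₀) := hL _ _
          _ ≤ |L| * dist (gg i x) (gg i x₀) :=
              mul_le_mul_of_nonneg_right (le_abs_self L) dist_nonneg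
          _ ≤ |L| * ((1 + εi i) * dist x x₀) := by
              apply mul_le_mul_of_nonneg_left (hggdist i x hx x₀ hx0) (abs_nonneg L)
          _ ≤ |L| * (2 * dist x x₀) := by
              apply mul_le_mul_of_nonneg_left ?_ (abs_nonneg L)
              have := dist_nonneg (x := x) (y := x₀)
              nlinarith
          _ = 2 * |L| * dist x x₀ := by ring
      rw [hK, Metric.mem_closedBall]
      exact hd
    have hKc : IsCompact K := isCompact_closedBall _ _
    have hmem : K ∈ Ultrafilter.map (φ f x) U := by
      rw [Ultrafilter.mem_map]
      exact hU hbd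
    obtain ⟨y, -, hy⟩ := hKc.ultrafilter_le_nhds (Ultrafilter.map (φ f x) U)
      (Filter.le_principal_iff.mpr hmem)
    have hy' : Filter.Tendsto (φ f x) ↑U (nhds y) := hy
    rw [hTeq f x y hy']
    exact hy'
  refine ⟨T, ?_, ?_, ?_⟩
  · rintro f ⟨L, hL⟩ hf0
    constructor
    · intro x
      apply hTeq
      have hev : ∀ᶠ i : I in ↑U, φ f (x : M) i = f x := by
        apply hU
        filter_upwards [hEv {(x : M)} 1 one_pos] with i hi
        obtain ⟨hsub, -⟩ := hi
        have hx : (x : M) ∈ i.1 := hsub (by simp)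
        simp only [φ, gg, dif_pos hx]
        exact congrArg f (Subtype.ext (hr2 i x hx x.2))
      exact Filter.Tendsto.congr' (Filter.EventuallyEq.symm hev) tendsto_const_nhds
    · intro L' hL'0 hL' x y
      have h1 := hTend f L' hL' hf0 x
      have h2 := hTend f L' hL' hf0 y
      have hd : Filter.Tendsto (fun i => dist (φ f x i) (φ f y i)) ↑U
          (nhds (dist (T f x) (T f y))) := h1.dist h2
      refine le_of_forall_pos_le_add ?_
      intro ε' hε'
      set D : ℝ := L' * dist x y with hD
      have hD0 : 0 ≤ D := mul_nonneg hL'0 dist_nonneg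
      set ε : ℝ := ε' / (D + 1) with hε
      have hεpos : 0 < ε := div_pos hε' (by linarith)
      have hev : ∀ᶠ i : I in ↑U,
          dist (φ f x i) (φ f y i) ≤ L' * ((1 + ε) * dist x y) := by
        apply hU
        filter_upwards [hEv {x, y} ε hεpos] with i hi
        obtain ⟨hsub, hεle⟩ := hi
        have hx : x ∈ i.1 := hsub (by simp)
        have hy : y ∈ i.1 := hsub (by simp)
        calc dist (φ f x i) (φ f y i) ≤ L' * dist (gg i x) (gg i y) := hL' _ _
          _ ≤ L' * ((1 + εi i) * dist x y) :=
              mul_le_mul_of_nonneg_left (hggdist i x hx y hy) hL'0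
          _ ≤ L' * ((1 + ε) * dist x y) := by
              apply mul_le_mul_of_nonneg_left ?_ hL'0
              apply mul_le_mul_of_nonneg_right (by linarith) dist_nonneg
      have hle := le_of_tendsto hd hev
      have hεD : ε * D ≤ ε' := by
        have : ε * (D + 1) = ε' := by
          rw [hε]; exact div_mul_cancel₀ ε' (by linarith : (0:ℝ) < D + 1).ne'
        nlinarith
      calc dist (T f x) (T f y) ≤ L' * ((1 + ε) * dist x y) := hle
        _ = D + ε * D := by rw [hD]; ring
        _ ≤ L' * dist x y + ε' := by rw [hD] at hεD ⊢; linarith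
  · rintro f g ⟨Lf, hLf⟩ hf0 ⟨Lg, hLg⟩ hg0 x
    have h1 := hTend f Lf hLf hf0 x
    have h2 := hTend g Lg hLg hg0 x
    apply hTeq
    have := h1.add h2
    apply this.congr
    intro i
    simp [φ, Pi.add_apply]
  · rintro f ⟨L, hL⟩ hf0 c x
    have h1 := hTend f L hL hf0 x
    apply hTeq
    have := h1.const_smul c
    apply this.congr
    intro i
    simp [φ, Pi.smul_apply]
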